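/- Let k be an infinite field and let L1, L2, L3, L4 be 2-dimensional linear subspaces of k^4 such that dim(L1 ∩ L2) = 1, dim(L3 ∩ L4) = 1, and L1 ∩ L2 ⊆ L3 + L4. Then the set of 2-dimensional linear subspaces W of k^4 with W ∩ Li ≠ 0 for all i = 1,2,3,4 is infinite. -/

import Mathlib

/-- Two pairs of intersecting lines in P^3, where the intersection point of the first
pair lies in the plane spanned by the second pair, have infinitely many common
transversals: stated linearly in terms of 2-dimensional subspaces of k^4. -/
theorem stmt1
    (k : Type*) [Field k] [Infinite k]
    (L1 L2 L3 L4 : Submodule k (Fin 4 → k))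
    (h1 : Module.finrank k L1 = 2) (h2 : Module.finrank k L2 = 2)
    (h3 : Module.finrank k L3 = 2) (h4 : Module.finrank k L4 = 2)
    (h12 : Module.finrank k ↥(L1 ⊓ L2) = 1)
    (h34 : Module.finrank k ↥(L3 ⊓ L4) = 1)
    (hspan : L1 ⊓ L2 ≤ L3 ⊔ L4) :
    {W : Submodule k (Fin 4 → k) | Module.finrank k W = 2 ∧
      W ⊓ L1 ≠ ⊥ ∧ W ⊓ L2 ≠ ⊥ ∧ W ⊓ L3 ≠ ⊥ ∧ W ⊓ L4 ≠ ⊥}.Infinite := by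
  -- the plane L3 ⊔ L4 has dimension 3
  have hP : Module.finrank k ↥(L3 ⊔ L4) = 3 := by
    have := Submodule.finrank_sup_add_finrank_inf_eq L3 L4
    omega
  -- a nonzero point p in L1 ⊓ L2
  obtain ⟨p, hp12, hp0⟩ : ∃ p ∈ L1 ⊓ L2, p ≠ 0 := by
    apply Submodule.exists_mem_ne_zero_of_ne_bot
    intro hb
    rw [hb] at h12
    simp [finrank_bot] at h12
  have hpP : p ∈ L3 ⊔ L4 := hspan hp12
  -- pick q1 in the plane, outside span {p}
  obtain ⟨q1, hq1P, hq1⟩ : ∃ q1 ∈ L3 ⊔ L4, q1 ∉ Submodule.span k {p} := by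
    by_contra h
    push_neg at h
    have hle : L3 ⊔ L4 ≤ Submodule.span k {p} := h
    have := Submodule.finrank_mono hle
    rw [hP, finrank_span_singleton hp0] at this
    omega
  have hq10 : q1 ≠ 0 := fun h => hq1 (h ▸ Submodule.zero_mem _)
  -- pick q2 in the plane, outside span {p, q1}
  obtain ⟨q2, hq2P, hq2⟩ : ∃ q2 ∈ L3 ⊔ L4, q2 ∉ Submodule.span k {p, q1} := by
    by_contra h
    push_neg at h
    have hle : L3 ⊔ L4 ≤ Submodule.span k {p, q1} := h
    have h' := Submodule.finrank_mono hle
    have : Submodule.span k ({p, q1} : Set (Fin 4 → k)) =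
        Submodule.span k {p} ⊔ Submodule.span k {q1} := by
      rw [← Submodule.span_union, Set.singleton_union]
    rw [hP, this] at h'
    have h'' := Submodule.finrank_sup_add_finrank_inf_eq
      (Submodule.span k {p}) (Submodule.span k ({q1} : Set (Fin 4 → k)))
    rw [finrank_span_singleton hp0, finrank_span_singleton hq10] at h''
    omega
  -- linear independence of p, q1, q2
  have hLI3 : LinearIndependent k ![q2, q1, p] := by
    show LinearIndependent k (Fin.cons q2 ![q1, p])
    rw [linearIndependent_fin_cons]
    refine ⟨?_, ?_⟩
    · show LinearIndependent k (Fin.cons q1 ![p])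
      rw [linearIndependent_fin_cons]
      refine ⟨?_, ?_⟩
      · exact linearIndependent_unique_iff.mpr hp0
      · have : Set.range ![p] = {p} := by
          ext x
          constructor
          · rintro ⟨i, rfl⟩; fin_cases i <;> simp
          · rintro rfl; exact ⟨0, rfl⟩
        rw [this]; exact hq1
    · have : Set.range ![q1, p] = {p, q1} := by
        ext x
        constructor
        · rintro ⟨i, rfl⟩; fin_cases i <;> simp
        · rintro (rfl | rfl)
          · exact ⟨1, rfl⟩
          · exact ⟨0, rfl⟩
      rw [this]; exact hq2
  have hLI : ∀ a b c : k, a • p + b • q1 + c • q2 = 0 → a = 0 ∧ b = 0 ∧ c = 0 := by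
    intro a b c habc
    have h := Fintype.linearIndependent_iff.mp hLI3 ![c, b, a] ?_
    · exact ⟨h 2, h 1, h 0⟩
    · show ∑ i : Fin 3, ![c, b, a] i • ![q2, q1, p] i = 0
      rw [Fin.sum_univ_three]
      simp only [Matrix.cons_val_zero, Matrix.cons_val_one, Matrix.head_cons,
        Matrix.cons_val_two, Matrix.tail_cons]
      linear_combination (norm := module) habc
  -- the family of transversals
  set f : k → Submodule k (Fin 4 → k) :=
    fun t => Submodule.span k {p, q1 + t • q2} with hf
  have hmemP : ∀ t, f t ≤ L3 ⊔ L4 := by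
    intro t
    rw [hf]
    apply Submodule.span_le.mpr
    rintro x (rfl | rfl)
    · exact hpP
    · exact Submodule.add_mem _ hq1P (Submodule.smul_mem _ _ hq2P)
  have hLIt : ∀ t : k, LinearIndependent k ![p, q1 + t • q2] := by
    intro t
    rw [Fintype.linearIndependent_iff]
    intro g hg
    simp [Fin.sum_univ_two] at hg
    have : g 0 • p + g 1 • q1 + (g 1 * t) • q2 = 0 := by
      rw [mul_smul]; linear_combination (norm := module) hg
    obtain ⟨ha, hb, -⟩ := hLI _ _ _ this
    intro i; fin_cases i <;> assumption
  have hrank : ∀ t : k, Module.finrank k ↥(f t) = 2 := by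
    intro t
    have := finrank_span_eq_card (hLIt t)
    have hr : Set.range ![p, q1 + t • q2] = {p, q1 + t • q2} := by
      ext x
      constructor
      · rintro ⟨i, rfl⟩; fin_cases i <;> simp
      · rintro (rfl | rfl)
        · exact ⟨0, rfl⟩
        · exact ⟨1, rfl⟩
    rw [hr] at this
    rw [hf]
    simpa using this
  have hinj : Function.Injective f := by
    intro s t hst
    have hmem : q1 + s • q2 ∈ f t := by
      rw [← hst, hf]
      exact Submodule.subset_span (by simp)
    rw [hf] at hmem
    obtain ⟨a, b, hab⟩ := Submodule.mem_span_pair.mp hmem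
    have : a • p + (b - 1) • q1 + (b * t - s) • q2 = 0 := by
      linear_combination (norm := module) hab
    obtain ⟨-, hb, hc⟩ := hLI _ _ _ this
    linear_combination -hc + t * hb
  apply Set.infinite_of_injective_forall_mem hinj
  intro t
  have hpW : p ∈ f t := Submodule.subset_span (by simp)
  have hmeet : ∀ L : Submodule k (Fin 4 → k), Module.finrank k L = 2 →
      L ≤ L3 ⊔ L4 → f t ⊓ L ≠ ⊥ := by
    intro L hL hLle
    have hsup : f t ⊔ L ≤ L3 ⊔ L4 := sup_le (hmemP t) hLle
    have h3' := Submodule.finrank_mono hsup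
    have heq := Submodule.finrank_sup_add_finrank_inf_eq (f t) L
    rw [hrank t, hL, hP] at *
    intro hbot
    rw [hbot] at heq
    simp [finrank_bot] at heq
    omega
  have hne : ∀ L : Submodule k (Fin 4 → k), p ∈ L → f t ⊓ L ≠ ⊥ := by
    intro L hpL hbot
    have : p ∈ f t ⊓ L := ⟨hpW, hpL⟩
    rw [hbot] at this
    exact hp0 (by simpa using this)
  exact ⟨hrank t, hne L1 hp12.1, hne L2 hp12.2,
    hmeet L3 h3 le_sup_left, hmeet L4 h4 le_sup_right⟩
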